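/- arXiv:1009.2975 — 8 statements merged into one kernel-verified Lean document; each statement's English description precedes it below -/
import Mathlib

section
/- Let (M,ω) be a 2-plectic manifold (ω a closed nondegenerate 3-form). If α and β are Hamiltonian 1-forms with Hamiltonian vector fields v_α, v_β, then the bracket {α,β} := ι_{v_β} ι_{v_α} ω is again Hamiltonian, with Hamiltonian vector field [v_α, v_β]; i.e., d{α,β} = -ι_{[v_α,v_β]} ω. -/
noncomputable section

/-- An abstract Cartan calculus on a manifold: vector fields `X`, smooth functions `Ω0`,
differential forms `Ω1`–`Ω4`, points `Pt`, with exterior derivative, interior products,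
evaluation at points, and the standard identities of the Cartan calculus. -/
structure CartanCalculus (X Ω0 Ω1 Ω2 Ω3 Ω4 Pt : Type*)
    [LieRing X] [LieAlgebra ℝ X]
    [CommRing Ω0] [Algebra ℝ Ω0] [Module Ω0 X]
    [AddCommGroup Ω1] [Module ℝ Ω1] [Module Ω0 Ω1]
    [AddCommGroup Ω2] [Module ℝ Ω2]
    [AddCommGroup Ω3] [Module ℝ Ω3]
    [AddCommGroup Ω4] [Module ℝ Ω4] where
  /-- exterior derivative on functions -/
  d0 : Ω0 →ₗ[ℝ] Ω1
  d1 : Ω1 →ₗ[ℝ] Ω2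
  d2 : Ω2 →ₗ[ℝ] Ω3
  d3 : Ω3 →ₗ[ℝ] Ω4
  /-- interior product of a vector field with a 1-form -/
  i1 : X → Ω1 →ₗ[ℝ] Ω0
  i2 : X → Ω2 →ₗ[ℝ] Ω1
  i3 : X → Ω3 →ₗ[ℝ] Ω2
  i4 : X → Ω4 →ₗ[ℝ] Ω3
  /-- evaluation of a function at a point -/
  ev : Pt → Ω0 →ₗ[ℝ] ℝ
  d1_d0 : ∀ f, d1 (d0 f) = 0
  d2_d1 : ∀ α, d2 (d1 α) = 0
  d3_d2 : ∀ B, d3 (d2 B) = 0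
  i_skew2 : ∀ v w B, i1 v (i2 w B) = - i1 w (i2 v B)
  i_skew3 : ∀ v w σ, i2 v (i3 w σ) = - i2 w (i3 v σ)
  i_skew4 : ∀ v w σ, i3 v (i4 w σ) = - i3 w (i4 v σ)
  /-- `ι_{[v,w]} = L_v ι_w - ι_w L_v` on 1-forms, with `L` given by Cartan's formula -/
  ibr1 : ∀ v w α, i1 ⁅v, w⁆ α =
    i1 v (d0 (i1 w α)) - i1 w (i2 v (d1 α) + d0 (i1 v α))
  ibr2 : ∀ v w B, i2 ⁅v, w⁆ B =
    (i2 v (d1 (i2 w B)) + d0 (i1 v (i2 w B))) - i2 w (i3 v (d2 B) + d1 (i2 v B))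
  ibr3 : ∀ v w σ, i3 ⁅v, w⁆ σ =
    (i3 v (d2 (i3 w σ)) + d1 (i2 v (i3 w σ))) - i3 w (i4 v (d3 σ) + d2 (i3 v σ))
  /-- a 1-form vanishing on all vector fields is zero -/
  i1_ext : ∀ α : Ω1, (∀ v, i1 v α = 0) → α = 0
  i2_ext : ∀ B : Ω2, (∀ v, i2 v B = 0) → B = 0
  d0_mul : ∀ f g, d0 (f * g) = f • d0 g + g • d0 f
  i1_smul : ∀ (v : X) (f : Ω0) (α : Ω1), i1 v (f • α) = f * i1 v α
  i1_smulX : ∀ (f : Ω0) (v : X) (α : Ω1), i1 (f • v) α = f * i1 v α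
  i2_smulX : ∀ (f : Ω0) (v : X) (B : Ω2), i2 (f • v) B = f • i2 v B
  lie_smul' : ∀ (v : X) (f : Ω0) (w : X), ⁅v, f • w⁆ = f • ⁅v, w⁆ + (i1 v (d0 f)) • w
  d0_algebraMap : ∀ r : ℝ, d0 (algebraMap ℝ Ω0 r) = 0
  ev_algebraMap : ∀ (x : Pt) (r : ℝ), ev x (algebraMap ℝ Ω0 r) = r

namespace CartanCalculus

variable {X Ω0 Ω1 Ω2 Ω3 Ω4 Pt : Type*}
    [LieRing X] [LieAlgebra ℝ X]
    [CommRing Ω0] [Algebra ℝ Ω0] [Module Ω0 X]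
    [AddCommGroup Ω1] [Module ℝ Ω1] [Module Ω0 Ω1]
    [AddCommGroup Ω2] [Module ℝ Ω2]
    [AddCommGroup Ω3] [Module ℝ Ω3]
    [AddCommGroup Ω4] [Module ℝ Ω4]
    (C : CartanCalculus X Ω0 Ω1 Ω2 Ω3 Ω4 Pt)

/-- Lie derivative of a function: `L_v f = ι_v df`. -/
def lie0 (v : X) (f : Ω0) : Ω0 := C.i1 v (C.d0 f)

/-- Lie derivative of a 1-form via Cartan's formula: `L_v α = ι_v dα + d ι_v α`. -/
def lie1 (v : X) (α : Ω1) : Ω1 := C.i2 v (C.d1 α) + C.d0 (C.i1 v α)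

/-- `α` is a Hamiltonian 1-form with Hamiltonian vector field `v`: `dα = -ι_v ω`. -/
def IsHam (ω : Ω3) (α : Ω1) (v : X) : Prop := C.d1 α = - C.i3 v ω

/-- `v` is a Hamiltonian vector field. -/
def IsHamVF (ω : Ω3) (v : X) : Prop := ∃ α : Ω1, C.IsHam ω α v

/-- The bracket of Hamiltonian 1-forms, `{α, β} = ι_{v_β} ι_{v_α} ω`, expressed through
the Hamiltonian vector fields `v = v_α`, `w = v_β`. -/
def brkt (ω : Ω3) (v w : X) : Ω1 := C.i2 w (C.i3 v ω)

/-- `ι_u ι_v ι_w ω`. -/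
def triple (ω : Ω3) (u v w : X) : Ω0 := C.i1 u (C.i2 v (C.i3 w ω))

/-- The standard symmetric pairing on sections of `TM ⊕ T*M`. -/
def pairP (e1 e2 : X × Ω1) : Ω0 := C.i1 e1.1 e2.2 + C.i1 e2.1 e1.2

/-- The standard Courant bracket on sections of `TM ⊕ T*M`. -/
def cb (e1 e2 : X × Ω1) : X × Ω1 :=
  (⁅e1.1, e2.1⁆,
    C.lie1 e1.1 e2.2 - C.lie1 e2.1 e1.2
      - (1/2 : ℝ) • C.d0 (C.i1 e1.1 e2.2 - C.i1 e2.1 e1.2))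

/-- The standard Dorfman bracket on sections of `TM ⊕ T*M`. -/
def db (e1 e2 : X × Ω1) : X × Ω1 :=
  (⁅e1.1, e2.1⁆, C.lie1 e1.1 e2.2 - C.i2 e2.1 (C.d1 e1.2))

/-- The `ω`-twisted Courant bracket. -/
def tcb (ω : Ω3) (e1 e2 : X × Ω1) : X × Ω1 :=
  C.cb e1 e2 - ((0 : X), C.i2 e2.1 (C.i3 e1.1 ω))

/-- The `ω`-twisted Dorfman bracket. -/
def tdb (ω : Ω3) (e1 e2 : X × Ω1) : X × Ω1 :=
  C.db e1 e2 - ((0 : X), C.i2 e2.1 (C.i3 e1.1 ω))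

/-- The homotopy `Φ(α,β) = -½(ι_{v_α}β - ι_{v_β}α)`. -/
def Phi (v : X) (α : Ω1) (w : X) (β : Ω1) : Ω0 :=
  -((1/2 : ℝ) • (C.i1 v β - C.i1 w α))

/-- The Jacobiator of the Courant Lie 2-algebra. -/
def Jprime (ω : Ω3) (e1 e2 e3 : X × Ω1) : Ω0 :=
  -((1/6 : ℝ) • (C.pairP (C.tcb ω e1 e2) e3 + C.pairP (C.tcb ω e3 e1) e2
      + C.pairP (C.tcb ω e2 e3) e1))

/-- The degree-1 bracket `[e,f] = ½⟨e, df⟩₊` of the Courant Lie 2-algebra. -/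
def brD1 (e : X × Ω1) (f : Ω0) : Ω0 :=
  (1/2 : ℝ) • C.pairP e ((0 : X), C.d0 f)

/-- The Lie algebroid bracket on `TM ⊕ ℝ` twisted by a 2-form `ω₂` (via the splitting
`s(v) = (v,0)`): `[(v₁,f₁),(v₂,f₂)] = ([v₁,v₂], v₁(f₂) - v₂(f₁) - ω₂(v₁,v₂))`. -/
def abr (ω2 : Ω2) (e1 e2 : X × Ω0) : X × Ω0 :=
  (⁅e1.1, e2.1⁆,
    C.i1 e1.1 (C.d0 e2.2) - C.i1 e2.1 (C.d0 e1.2) - C.i1 e2.1 (C.i2 e1.1 ω2))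

end CartanCalculus

open CartanCalculus

variable {X Ω0 Ω1 Ω2 Ω3 Ω4 Pt : Type*}
    [LieRing X] [LieAlgebra ℝ X]
    [CommRing Ω0] [Algebra ℝ Ω0] [Module Ω0 X]
    [AddCommGroup Ω1] [Module ℝ Ω1] [Module Ω0 Ω1]
    [AddCommGroup Ω2] [Module ℝ Ω2]
    [AddCommGroup Ω3] [Module ℝ Ω3]
    [AddCommGroup Ω4] [Module ℝ Ω4]

/-- On a 2-plectic manifold, the bracket of Hamiltonian 1-forms is Hamiltonian,
with Hamiltonian vector field the Lie bracket of the Hamiltonian vector fields. -/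
theorem bracket_isHamiltonian
    (C : CartanCalculus X Ω0 Ω1 Ω2 Ω3 Ω4 Pt) (ω : Ω3)
    (hcl : C.d3 ω = 0) (hnd : ∀ v : X, C.i3 v ω = 0 → v = 0)
    (α β : Ω1) (vα vβ : X)
    (hα : C.IsHam ω α vα) (hβ : C.IsHam ω β vβ) :
    C.d1 (C.brkt ω vα vβ) = - C.i3 ⁅vα, vβ⁆ ω := by
  have h3 := C.ibr3 vα vβ ω
  have hv : C.d2 (C.i3 vα ω) = 0 := by
    have : C.i3 vα ω = - C.d1 α := by rw [hα]; simp
    rw [this]; simp [C.d2_d1]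
  have hw : C.d2 (C.i3 vβ ω) = 0 := by
    have : C.i3 vβ ω = - C.d1 β := by rw [hβ]; simp
    rw [this]; simp [C.d2_d1]
  rw [hcl, hv, hw] at h3
  simp at h3
  have hb : C.brkt ω vα vβ = - C.i2 vα (C.i3 vβ ω) := by
    unfold CartanCalculus.brkt
    rw [C.i_skew3]
  rw [hb, h3]
  simp

end
end

section
/- On a 2-plectic manifold (M,ω), the bracket {α,β} = ι_{v_β} ι_{v_α} ω on Hamiltonian 1-forms satisfies the Jacobi identity up to an exact term: {α,{β,γ}} - {{α,β},γ} - {β,{α,γ}} = d(ι_{v_α} ι_{v_β} ι_{v_γ} ω). -/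
noncomputable section

open CartanCalculus

variable {X Ω0 Ω1 Ω2 Ω3 Ω4 Pt : Type*}
    [LieRing X] [LieAlgebra ℝ X]
    [CommRing Ω0] [Algebra ℝ Ω0] [Module Ω0 X]
    [AddCommGroup Ω1] [Module ℝ Ω1] [Module Ω0 Ω1]
    [AddCommGroup Ω2] [Module ℝ Ω2]
    [AddCommGroup Ω3] [Module ℝ Ω3]
    [AddCommGroup Ω4] [Module ℝ Ω4]

/-- The bracket of Hamiltonian 1-forms satisfies the Jacobi identity up to an exact term. -/
theorem jacobi_up_to_exact
    (C : CartanCalculus X Ω0 Ω1 Ω2 Ω3 Ω4 Pt) (ω : Ω3)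
    (hcl : C.d3 ω = 0) (hnd : ∀ v : X, C.i3 v ω = 0 → v = 0)
    (α β γ : Ω1) (vα vβ vγ : X)
    (hα : C.IsHam ω α vα) (hβ : C.IsHam ω β vβ) (hγ : C.IsHam ω γ vγ) :
    C.brkt ω vα ⁅vβ, vγ⁆ - C.brkt ω ⁅vα, vβ⁆ vγ - C.brkt ω vβ ⁅vα, vγ⁆
      = C.d0 (C.triple ω vα vβ vγ) := by
  -- closedness of ι_v ω for Hamiltonian v
  have hdα : C.d2 (C.i3 vα ω) = 0 := by
    have := hα; unfold CartanCalculus.IsHam at this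
    have : C.i3 vα ω = - C.d1 α := by rw [this]; abel
    rw [this, map_neg, C.d2_d1, neg_zero]
  have hdβ : C.d2 (C.i3 vβ ω) = 0 := by
    have := hβ; unfold CartanCalculus.IsHam at this
    have : C.i3 vβ ω = - C.d1 β := by rw [this]; abel
    rw [this, map_neg, C.d2_d1, neg_zero]
  have hdγ : C.d2 (C.i3 vγ ω) = 0 := by
    have := hγ; unfold CartanCalculus.IsHam at this
    have : C.i3 vγ ω = - C.d1 γ := by rw [this]; abel
    rw [this, map_neg, C.d2_d1, neg_zero]
  -- key: ι_{[v,w]} ω = d (ι_v ι_w ω) for Hamiltonian v, w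
  have key : ∀ v w : X, C.d2 (C.i3 v ω) = 0 → C.d2 (C.i3 w ω) = 0 →
      C.i3 ⁅v, w⁆ ω = C.d1 (C.i2 v (C.i3 w ω)) := by
    intro v w hv hw
    have := C.ibr3 v w ω
    rw [hcl, hv, hw] at this
    simpa using this
  unfold CartanCalculus.brkt CartanCalculus.triple
  -- expand ι_{[vβ,vγ]} (ι_{vα} ω) with ibr2
  have h2 := C.ibr2 vβ vγ (C.i3 vα ω)
  rw [hdα, map_zero, zero_add] at h2
  -- d (ι_{vγ} ι_{vα} ω) = - ι_{[vα,vγ]} ω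
  have hγ' : C.d1 (C.i2 vγ (C.i3 vα ω)) = - C.i3 ⁅vα, vγ⁆ ω := by
    have hs : C.i2 vγ (C.i3 vα ω) = - C.i2 vα (C.i3 vγ ω) := C.i_skew3 _ _ _
    rw [hs, map_neg, ← key vα vγ hdα hdγ]
  have hβ' : C.d1 (C.i2 vβ (C.i3 vα ω)) = - C.i3 ⁅vα, vβ⁆ ω := by
    have hs : C.i2 vβ (C.i3 vα ω) = - C.i2 vα (C.i3 vβ ω) := C.i_skew3 _ _ _
    rw [hs, map_neg, ← key vα vβ hdα hdβ]
  rw [hγ', hβ', map_neg, map_neg] at h2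
  -- skew-symmetry rewrites
  have s1 : C.i2 ⁅vα, vγ⁆ (C.i3 vβ ω) = - C.i2 vβ (C.i3 ⁅vα, vγ⁆ ω) :=
    C.i_skew3 _ _ _
  have s2 : C.i1 vβ (C.i2 vγ (C.i3 vα ω)) = C.i1 vα (C.i2 vβ (C.i3 vγ ω)) := by
    rw [C.i_skew3 vγ vα ω, map_neg, C.i_skew2 vβ vα (C.i3 vγ ω), neg_neg]
  rw [h2, s1, ← s2]
  abel

end
end

section
/- On a 2-plectic manifold (M,ω), the set of Hamiltonian vector fields is a Lie subalgebra of the Lie algebra of vector fields on M: if v_α and v_β are Hamiltonian vector fields of Hamiltonian 1-forms α and β, then [v_α, v_β] is the Hamiltonian vector field of {α,β}, hence Hamiltonian. -/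
noncomputable section

open CartanCalculus

variable {X Ω0 Ω1 Ω2 Ω3 Ω4 Pt : Type*}
    [LieRing X] [LieAlgebra ℝ X]
    [CommRing Ω0] [Algebra ℝ Ω0] [Module Ω0 X]
    [AddCommGroup Ω1] [Module ℝ Ω1] [Module Ω0 Ω1]
    [AddCommGroup Ω2] [Module ℝ Ω2]
    [AddCommGroup Ω3] [Module ℝ Ω3]
    [AddCommGroup Ω4] [Module ℝ Ω4]

/-- Hamiltonian vector fields form a Lie subalgebra: `[v_α, v_β]` is the Hamiltonian
vector field of `{α,β}`, hence Hamiltonian. -/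
theorem hamVF_lie_subalgebra
    (C : CartanCalculus X Ω0 Ω1 Ω2 Ω3 Ω4 Pt) (ω : Ω3)
    (hcl : C.d3 ω = 0) (hnd : ∀ v : X, C.i3 v ω = 0 → v = 0)
    (α β : Ω1) (vα vβ : X)
    (hα : C.IsHam ω α vα) (hβ : C.IsHam ω β vβ) :
    C.d1 (C.brkt ω vα vβ) = - C.i3 ⁅vα, vβ⁆ ω ∧ C.IsHamVF ω ⁅vα, vβ⁆ := by
  have key : C.d1 (C.brkt ω vα vβ) = - C.i3 ⁅vα, vβ⁆ ω := by
    have h1 : C.d2 (C.i3 vβ ω) = 0 := by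
      have : C.i3 vβ ω = - C.d1 β := by rw [hβ]; abel
      rw [this, map_neg, C.d2_d1, neg_zero]
    have h2 : C.d2 (C.i3 vα ω) = 0 := by
      have : C.i3 vα ω = - C.d1 α := by rw [hα]; abel
      rw [this, map_neg, C.d2_d1, neg_zero]
    have hb : C.i3 ⁅vα, vβ⁆ ω = C.d1 (C.i2 vα (C.i3 vβ ω)) := by
      rw [C.ibr3, hcl, h1, h2, map_zero, map_zero]
      simp
    have hskew : C.brkt ω vα vβ = - C.i2 vα (C.i3 vβ ω) := by
      unfold CartanCalculus.brkt
      rw [C.i_skew3]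
    rw [hskew, map_neg, hb]
  exact ⟨key, ⟨C.brkt ω vα vβ, key⟩⟩

end
end

section
/- On a 2-plectic manifold (M,ω), for Hamiltonian 1-forms α, β with Hamiltonian vector fields v_α, v_β, one has L_{v_α} β - L_{v_β} α = 2{α,β} + d(ι_{v_α} β - ι_{v_β} α). -/
noncomputable section

open CartanCalculus

variable {X Ω0 Ω1 Ω2 Ω3 Ω4 Pt : Type*}
    [LieRing X] [LieAlgebra ℝ X]
    [CommRing Ω0] [Algebra ℝ Ω0] [Module Ω0 X]
    [AddCommGroup Ω1] [Module ℝ Ω1] [Module Ω0 Ω1]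
    [AddCommGroup Ω2] [Module ℝ Ω2]
    [AddCommGroup Ω3] [Module ℝ Ω3]
    [AddCommGroup Ω4] [Module ℝ Ω4]

/-- `L_{v_α} β - L_{v_β} α = 2{α,β} + d(ι_{v_α}β - ι_{v_β}α)`. -/
theorem lieDeriv_antisym
    (C : CartanCalculus X Ω0 Ω1 Ω2 Ω3 Ω4 Pt) (ω : Ω3)
    (hcl : C.d3 ω = 0) (hnd : ∀ v : X, C.i3 v ω = 0 → v = 0)
    (α β : Ω1) (vα vβ : X)
    (hα : C.IsHam ω α vα) (hβ : C.IsHam ω β vβ) :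
    C.lie1 vα β - C.lie1 vβ α
      = (2 : ℝ) • C.brkt ω vα vβ + C.d0 (C.i1 vα β - C.i1 vβ α) := by
  have h1 : C.d1 β = - C.i3 vβ ω := hβ
  have h2 : C.d1 α = - C.i3 vα ω := hα
  have hsk := C.i_skew3 vα vβ ω
  simp only [lie1, brkt, h1, h2, map_neg, map_sub]
  rw [hsk]
  module

end
end

section
/- On a 2-plectic manifold (M,ω), for Hamiltonian 1-forms α, β, γ with Hamiltonian vector fields v_α, v_β, v_γ: ι_{[v_α,v_β]} γ + ι_{[v_β,v_γ]} α + ι_{[v_γ,v_α]} β = -3 ι_{v_α} ι_{v_β} ι_{v_γ} ω + ι_{v_α} d(ι_{v_β}γ - ι_{v_γ}β) + ι_{v_γ} d(ι_{v_α}β - ι_{v_β}α) + ι_{v_β} d(ι_{v_γ}α - ι_{v_α}γ). -/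
noncomputable section

open CartanCalculus

variable {X Ω0 Ω1 Ω2 Ω3 Ω4 Pt : Type*}
    [LieRing X] [LieAlgebra ℝ X]
    [CommRing Ω0] [Algebra ℝ Ω0] [Module Ω0 X]
    [AddCommGroup Ω1] [Module ℝ Ω1] [Module Ω0 Ω1]
    [AddCommGroup Ω2] [Module ℝ Ω2]
    [AddCommGroup Ω3] [Module ℝ Ω3]
    [AddCommGroup Ω4] [Module ℝ Ω4]

/-- Cyclic contraction identity for Hamiltonian 1-forms on a 2-plectic manifold. -/
theorem cyclic_contraction
    (C : CartanCalculus X Ω0 Ω1 Ω2 Ω3 Ω4 Pt) (ω : Ω3)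
    (hcl : C.d3 ω = 0) (hnd : ∀ v : X, C.i3 v ω = 0 → v = 0)
    (α β γ : Ω1) (vα vβ vγ : X)
    (hα : C.IsHam ω α vα) (hβ : C.IsHam ω β vβ) (hγ : C.IsHam ω γ vγ) :
    C.i1 ⁅vα, vβ⁆ γ + C.i1 ⁅vβ, vγ⁆ α + C.i1 ⁅vγ, vα⁆ β
      = (-3 : ℝ) • C.triple ω vα vβ vγ
        + C.i1 vα (C.d0 (C.i1 vβ γ - C.i1 vγ β))
        + C.i1 vγ (C.d0 (C.i1 vα β - C.i1 vβ α))
        + C.i1 vβ (C.d0 (C.i1 vγ α - C.i1 vα γ)) := by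
  simp only [IsHam] at hα hβ hγ
  have h1 : C.i1 vβ (C.i2 vα (C.i3 vγ ω)) = - C.triple ω vα vβ vγ := by
    rw [C.i_skew2]; simp only [triple]
  have h2 : C.i1 vγ (C.i2 vβ (C.i3 vα ω)) = - C.triple ω vα vβ vγ := by
    rw [C.i_skew3, map_neg, C.i_skew2, neg_neg, C.i_skew3, map_neg]
    simp only [triple]
  have h3 : C.i1 vα (C.i2 vγ (C.i3 vβ ω)) = - C.triple ω vα vβ vγ := by
    rw [C.i_skew3, map_neg]; simp only [triple]
  rw [C.ibr1 vα vβ γ, C.ibr1 vβ vγ α, C.ibr1 vγ vα β, hα, hβ, hγ]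
  simp only [map_add, map_neg, map_sub, h1, h2, h3]
  have h4 : (-3 : ℝ) • C.triple ω vα vβ vγ
      = - C.triple ω vα vβ vγ - C.triple ω vα vβ vγ - C.triple ω vα vβ vγ := by
    module
  rw [h4]; ring

end
end

section
/- Let (M,ω) be a 2-plectic manifold. The 2-term chain complex C^∞(M) --d--> Ω¹_Ham(M), with the bracket equal to {α,β} = ι_{v_β} ι_{v_α} ω in degree 0 and zero otherwise, and Jacobiator J(α,β,γ) = ι_{v_α} ι_{v_β} ι_{v_γ} ω, forms a Lie 2-algebra: the Jacobiator is a chain homotopy between [x,[y,z]] and [[x,y],z] + [y,[x,z]], and it satisfies the coherence identity [x,J(y,z,w)] + J(x,[y,z],w) + J(x,z,[y,w]) + [J(x,y,z),w] + [z,J(x,y,w)] = J(x,y,[z,w]) + J([x,y],z,w) + [y,J(x,z,w)] + J(y,[x,z],w) + J(y,z,[x,w]). -/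
noncomputable section

open CartanCalculus

variable {X Ω0 Ω1 Ω2 Ω3 Ω4 Pt : Type*}
    [LieRing X] [LieAlgebra ℝ X]
    [CommRing Ω0] [Algebra ℝ Ω0] [Module Ω0 X]
    [AddCommGroup Ω1] [Module ℝ Ω1] [Module Ω0 Ω1]
    [AddCommGroup Ω2] [Module ℝ Ω2]
    [AddCommGroup Ω3] [Module ℝ Ω3]
    [AddCommGroup Ω4] [Module ℝ Ω4]

private lemma t12 (C : CartanCalculus X Ω0 Ω1 Ω2 Ω3 Ω4 Pt) (ω : Ω3) (u v w : X) :
    C.triple ω u v w = - C.triple ω v u w := by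
  simp only [triple]
  rw [C.i_skew2]

private lemma t23 (C : CartanCalculus X Ω0 Ω1 Ω2 Ω3 Ω4 Pt) (ω : Ω3) (u v w : X) :
    C.triple ω u v w = - C.triple ω u w v := by
  simp only [triple]
  rw [C.i_skew3, map_neg]

private lemma d1_brkt (C : CartanCalculus X Ω0 Ω1 Ω2 Ω3 Ω4 Pt) (ω : Ω3)
    (hcl : C.d3 ω = 0) {α β : Ω1} {v w : X}
    (hv : C.IsHam ω α v) (hw : C.IsHam ω β w) :
    C.d1 (C.i2 w (C.i3 v ω)) = - C.i3 ⁅v, w⁆ ω := by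
  have hiv : C.i3 v ω = - C.d1 α := by rw [hv, neg_neg]
  have hiw : C.i3 w ω = - C.d1 β := by rw [hw, neg_neg]
  have hdv : C.d2 (C.i3 v ω) = 0 := by rw [hiv, map_neg, C.d2_d1, neg_zero]
  have hdw : C.d2 (C.i3 w ω) = 0 := by rw [hiw, map_neg, C.d2_d1, neg_zero]
  have h3 := C.ibr3 v w ω
  rw [hcl, map_zero, hdv, hdw, map_zero, zero_add, zero_add, map_zero, sub_zero] at h3
  rw [C.i_skew3, map_neg, ← h3]

private lemma part1 (C : CartanCalculus X Ω0 Ω1 Ω2 Ω3 Ω4 Pt) (ω : Ω3)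
    (hcl : C.d3 ω = 0) {α β γ : Ω1} {va vb vc : X}
    (ha : C.IsHam ω α va) (hb : C.IsHam ω β vb) (hc : C.IsHam ω γ vc) :
    C.brkt ω va ⁅vb, vc⁆ - C.brkt ω ⁅va, vb⁆ vc - C.brkt ω vb ⁅va, vc⁆
      = C.d0 (C.triple ω va vb vc) := by
  have hA : C.d2 (C.i3 va ω) = 0 := by
    have : C.i3 va ω = - C.d1 α := by rw [ha, neg_neg]
    rw [this, map_neg, C.d2_d1, neg_zero]
  have hac : C.d1 (C.i2 vc (C.i3 va ω)) = - C.i3 ⁅va, vc⁆ ω :=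
    d1_brkt C ω hcl ha hc
  have hab : C.d1 (C.i2 vb (C.i3 va ω)) = - C.i3 ⁅va, vb⁆ ω :=
    d1_brkt C ω hcl ha hb
  have h2 := C.ibr2 vb vc (C.i3 va ω)
  rw [hA, map_zero, hac, hab, zero_add, map_neg, map_neg] at h2
  -- h2 : i2 ⁅vb,vc⁆ (i3 va ω)
  --   = (-(i2 vb (i3 ⁅va,vc⁆ ω)) + d0 (i1 vb (i2 vc (i3 va ω)))) - -(i2 vc (i3 ⁅va,vb⁆ ω))
  have e1 : C.brkt ω va ⁅vb, vc⁆ = C.i2 ⁅vb, vc⁆ (C.i3 va ω) := rfl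
  have e2 : C.i2 vb (C.i3 ⁅va, vc⁆ ω) = - C.brkt ω vb ⁅va, vc⁆ := by
    rw [brkt, C.i_skew3]
  have e3 : C.i2 vc (C.i3 ⁅va, vb⁆ ω) = C.brkt ω ⁅va, vb⁆ vc := rfl
  have e4 : C.i1 vb (C.i2 vc (C.i3 va ω)) = C.triple ω va vb vc := by
    have : C.triple ω vb vc va = C.triple ω va vb vc := by
      rw [t23 C ω vb vc va, t12 C ω vb va vc, neg_neg]
    rw [← this]; rfl
  rw [e1, h2, e2, e3, e4]
  abel

private lemma part1' (C : CartanCalculus X Ω0 Ω1 Ω2 Ω3 Ω4 Pt) (ω : Ω3)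
    (hcl : C.d3 ω = 0) {α β γ : Ω1} {va vb vc : X}
    (ha : C.IsHam ω α va) (hb : C.IsHam ω β vb) (hc : C.IsHam ω γ vc) (u : X) :
    C.triple ω u ⁅vb, vc⁆ va - C.triple ω u vc ⁅va, vb⁆ - C.triple ω u ⁅va, vc⁆ vb
      = C.i1 u (C.d0 (C.triple ω va vb vc)) := by
  have h := congrArg (C.i1 u) (part1 C ω hcl ha hb hc)
  rw [map_sub, map_sub] at h
  exact h

private lemma ibr1_ham (C : CartanCalculus X Ω0 Ω1 Ω2 Ω3 Ω4 Pt) (ω : Ω3)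
    (hcl : C.d3 ω = 0) {α β : Ω1} {v w : X}
    (hv : C.IsHam ω α v) (hw : C.IsHam ω β w) (a b : X) :
    C.triple ω ⁅a, b⁆ w v
      = C.i1 a (C.d0 (C.triple ω b w v)) - C.i1 b (C.d0 (C.triple ω a w v))
        + C.triple ω b a ⁅v, w⁆ := by
  have h := C.ibr1 a b (C.i2 w (C.i3 v ω))
  rw [d1_brkt C ω hcl hv hw] at h
  simp only [map_neg, map_add] at h
  have e : C.triple ω ⁅a, b⁆ w v = C.i1 ⁅a, b⁆ (C.i2 w (C.i3 v ω)) := rfl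
  rw [e, h]
  have e2 : C.i1 b (C.i2 a (C.i3 ⁅v, w⁆ ω)) = C.triple ω b a ⁅v, w⁆ := rfl
  rw [e2]
  have e3 : C.i1 b (C.d0 (C.i1 a (C.i2 w (C.i3 v ω))))
      = C.i1 b (C.d0 (C.triple ω a w v)) := rfl
  rw [e3]
  have e4 : C.i1 a (C.d0 (C.i1 b (C.i2 w (C.i3 v ω))))
      = C.i1 a (C.d0 (C.triple ω b w v)) := rfl
  rw [e4]
  abel

/-- The complex `C^∞(M) → Ω¹_Ham(M)` with the bracket `{α,β}` and the Jacobiator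
`J(α,β,γ) = ι_{v_α}ι_{v_β}ι_{v_γ}ω` is a Lie 2-algebra: `J` is a chain homotopy from
`[x,[y,z]]` to `[[x,y],z] + [y,[x,z]]`, and it satisfies the coherence identity
(all brackets having a degree-1 argument vanish). -/
theorem lie_two_algebra
    (C : CartanCalculus X Ω0 Ω1 Ω2 Ω3 Ω4 Pt) (ω : Ω3)
    (hcl : C.d3 ω = 0) (hnd : ∀ v : X, C.i3 v ω = 0 → v = 0) :
    (∀ (α β γ : Ω1) (vα vβ vγ : X),
      C.IsHam ω α vα → C.IsHam ω β vβ → C.IsHam ω γ vγ →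
      C.brkt ω vα ⁅vβ, vγ⁆ - C.brkt ω ⁅vα, vβ⁆ vγ - C.brkt ω vβ ⁅vα, vγ⁆
        = C.d0 (C.triple ω vα vβ vγ))
    ∧
    (∀ (x y z w : Ω1) (vx vy vz vw : X),
      C.IsHam ω x vx → C.IsHam ω y vy → C.IsHam ω z vz → C.IsHam ω w vw →
      C.triple ω vx ⁅vy, vz⁆ vw + C.triple ω vx vz ⁅vy, vw⁆
        = C.triple ω vx vy ⁅vz, vw⁆ + C.triple ω ⁅vx, vy⁆ vz vw
          + C.triple ω vy ⁅vx, vz⁆ vw + C.triple ω vy vz ⁅vx, vw⁆) := by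
  constructor
  · intro α β γ va vb vc ha hb hc
    exact part1 C ω hcl ha hb hc
  · intro x y z w vx vy vz vw hx hy hz hw
    -- skew-symmetry facts
    have u1 := t23 C ω vx ⁅vy, vz⁆ vw
    have u2 := t23 C ω vy ⁅vx, vz⁆ vw
    have u3 := t23 C ω ⁅vx, vy⁆ vz vw
    have u4 : C.triple ω vy vx ⁅vz, vw⁆ = - C.triple ω vx vy ⁅vz, vw⁆ :=
      t12 C ω vy vx ⁅vz, vw⁆
    have s5 : C.i1 vx (C.d0 (C.triple ω vy vw vz))
        = - C.i1 vx (C.d0 (C.triple ω vy vz vw)) := by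
      rw [t23 C ω vy vw vz, map_neg, map_neg]
    have s6 : C.i1 vy (C.d0 (C.triple ω vx vw vz))
        = - C.i1 vy (C.d0 (C.triple ω vx vz vw)) := by
      rw [t23 C ω vx vw vz, map_neg, map_neg]
    have u7 := ibr1_ham C ω hcl hz hw vx vy
    have u8 := part1' C ω hcl hy hz hw vx
    have u9 := t23 C ω vx ⁅vz, vw⁆ vy
    have u10 := t23 C ω vx ⁅vy, vw⁆ vz
    have u11 := part1' C ω hcl hx hz hw vy
    have u12 := t23 C ω vy ⁅vz, vw⁆ vx
    have u13 := t23 C ω vy ⁅vx, vw⁆ vz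
    -- extra normalizations
    have u9' : C.triple ω vx vy ⁅vz, vw⁆ = - C.triple ω vx ⁅vz, vw⁆ vy := by
      rw [u9, neg_neg]
    have u12' : C.triple ω vy ⁅vz, vw⁆ vx = C.triple ω vx vy ⁅vz, vw⁆ := by
      rw [u12, t12 C ω vy vx ⁅vz, vw⁆, neg_neg]
    linear_combination u1 - u2 - u3 + s5 - s6 + u7 + u8 - u9 + u10 - u11 + u12' + u4 - u13

end
end

section
/- Let (M,ω) be a 2-plectic manifold and C = TM ⊕ T*M the ω-twisted Courant algebroid with twisted Courant bracket ⟦·,·⟧. The maps φ₀(α) = v_α + α on Hamiltonian 1-forms, φ₁ = id on smooth functions, together with the homotopy Φ(α,β) = -½(ι_{v_α}β - ι_{v_β}α), define a morphism of Lie 2-algebras from L_∞(M,ω) to L_∞(C); in particular φ₀({α,β}) - ⟦φ₀(α),φ₀(β)⟧ = dΦ(α,β), and the coherence condition relating the two Jacobiators holds. -/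
noncomputable section

open CartanCalculus

variable {X Ω0 Ω1 Ω2 Ω3 Ω4 Pt : Type*}
    [LieRing X] [LieAlgebra ℝ X]
    [CommRing Ω0] [Algebra ℝ Ω0] [Module Ω0 X]
    [AddCommGroup Ω1] [Module ℝ Ω1] [Module Ω0 Ω1]
    [AddCommGroup Ω2] [Module ℝ Ω2]
    [AddCommGroup Ω3] [Module ℝ Ω3]
    [AddCommGroup Ω4] [Module ℝ Ω4]

/-- The maps `φ₀(α) = v_α + α`, `φ₁ = id`, with homotopy `Φ(α,β) = -½(ι_{v_α}β - ι_{v_β}α)`,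
form a Lie 2-algebra morphism from `L_∞(M,ω)` to `L_∞(C)`: the homotopy condition holds
in degrees 0 and 1, and the coherence condition relating the Jacobiators holds. -/
theorem morphism_to_courant
    (C : CartanCalculus X Ω0 Ω1 Ω2 Ω3 Ω4 Pt) (ω : Ω3)
    (hcl : C.d3 ω = 0) (hnd : ∀ v : X, C.i3 v ω = 0 → v = 0) :
    (∀ (α β : Ω1) (vα vβ : X), C.IsHam ω α vα → C.IsHam ω β vβ →
      ((⁅vα, vβ⁆, C.brkt ω vα vβ) : X × Ω1) - C.tcb ω (vα, α) (vβ, β)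
        = ((0 : X), C.d0 (C.Phi vα α vβ β)))
    ∧
    (∀ (α : Ω1) (vα : X) (f : Ω0), C.IsHam ω α vα →
      (0 : Ω0) - C.brD1 (vα, α) f = C.Phi vα α (0 : X) (C.d0 f))
    ∧
    (∀ (α β γ : Ω1) (vα vβ vγ : X),
      C.IsHam ω α vα → C.IsHam ω β vβ → C.IsHam ω γ vγ →
      C.triple ω vα vβ vγ - C.Jprime ω (vα, α) (vβ, β) (vγ, γ)
        = C.Phi vα α ⁅vβ, vγ⁆ (C.brkt ω vβ vγ)
          - C.Phi ⁅vα, vβ⁆ (C.brkt ω vα vβ) vγ γ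
          - C.Phi vβ β ⁅vα, vγ⁆ (C.brkt ω vα vγ)
          + C.brD1 (vγ, γ) (C.Phi vα α vβ β)
          + C.brD1 (vα, α) (C.Phi vβ β vγ γ)
          - C.brD1 (vβ, β) (C.Phi vα α vγ γ)) := by
  constructor
  · -- homotopy condition, degree 0
    intro α β a b hα hβ
    rw [IsHam] at hα hβ
    have key : C.brkt ω a b
        - ((C.lie1 a β - C.lie1 b α
            - (1/2 : ℝ) • C.d0 (C.i1 a β - C.i1 b α)) - C.i2 b (C.i3 a ω))
        = C.d0 (C.Phi a α b β) := by
      have hs : C.i2 a (C.i3 b ω) = - C.i2 b (C.i3 a ω) := C.i_skew3 a b ω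
      simp only [brkt, lie1, Phi, hα, hβ, hs, map_add, map_sub, map_neg, map_smul]
      module
    ext
    · show ⁅a, b⁆ - (⁅a, b⁆ - 0) = 0
      abel
    · exact key
  constructor
  · -- homotopy condition, degree 1
    intro α a f hα
    have h0 : C.i1 (0 : X) α = 0 := by
      have := C.i1_smulX (0 : Ω0) (0 : X) α
      rw [zero_smul] at this
      rw [this, zero_mul]
    simp only [brD1, pairP, Phi, h0]
    module
  · -- coherence of the Jacobiators
    intro α β γ a b c hα hβ hγ
    rw [IsHam] at hα hβ hγ
    -- canonical triple product
    set T : Ω0 := C.i1 a (C.i2 b (C.i3 c ω)) with hT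
    have s3 : ∀ u v w : X, C.i1 u (C.i2 v (C.i3 w ω)) = -C.i1 u (C.i2 w (C.i3 v ω)) := by
      intro u v w; rw [C.i_skew3 v w ω, map_neg]
    have t1 : C.i1 a (C.i2 c (C.i3 b ω)) = -T := by rw [s3, hT]
    have t3 : C.i1 b (C.i2 a (C.i3 c ω)) = -T := by rw [C.i_skew2, hT]
    have t4 : C.i1 b (C.i2 c (C.i3 a ω)) = T := by
      rw [s3, t3, neg_neg]
    have t2 : C.i1 c (C.i2 b (C.i3 a ω)) = -T := by
      rw [C.i_skew2, t4]
    have t5 : C.i1 c (C.i2 a (C.i3 b ω)) = T := by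
      rw [s3, t2, neg_neg]
    have h0 : ∀ ξ : Ω1, C.i1 (0 : X) ξ = 0 := by
      intro ξ
      have := C.i1_smulX (0 : Ω0) (0 : X) ξ
      rw [zero_smul] at this
      rw [this, zero_mul]
    -- Lie-bracket contractions
    have hbc : C.i1 ⁅b, c⁆ α
        = C.i1 b (C.d0 (C.i1 c α)) - C.i1 c (C.d0 (C.i1 b α)) - T := by
      rw [C.ibr1 b c α, hα]
      simp only [map_add, map_neg, t2]
      ring
    have hab : C.i1 ⁅a, b⁆ γ
        = C.i1 a (C.d0 (C.i1 b γ)) - C.i1 b (C.d0 (C.i1 a γ)) - T := by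
      rw [C.ibr1 a b γ, hγ]
      simp only [map_add, map_neg, t3]
      ring
    have hac : C.i1 ⁅a, c⁆ β
        = C.i1 a (C.d0 (C.i1 c β)) - C.i1 c (C.d0 (C.i1 a β)) + T := by
      rw [C.ibr1 a c β, hβ]
      simp only [map_add, map_neg, t5]
      ring
    have hca : C.i1 ⁅c, a⁆ β
        = C.i1 c (C.d0 (C.i1 a β)) - C.i1 a (C.d0 (C.i1 c β)) - T := by
      rw [C.ibr1 c a β, hβ]
      simp only [map_add, map_neg, t1]
      ring
    simp only [triple, Jprime, pairP, tcb, cb, brkt, lie1, Phi, brD1, hα, hβ, hγ,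
      Prod.fst_sub, Prod.snd_sub, Prod.fst_zero, Prod.snd_zero,
      map_add, map_sub, map_neg, map_smul, map_zero,
      sub_zero, hbc, hab, hac, hca, t1, t2, t3, t4, t5, h0, hT]
    module


end
end

section
/- Let (M,ω) be a 2-plectic manifold and x ∈ M. Then J_x(v₁,v₂,v₃) := ω(v₁,v₂,v₃)|_x defines a 3-cocycle in the Chevalley–Eilenberg complex of the Lie algebra of Hamiltonian vector fields with values in the trivial representation ℝ: ω([v₁,v₂],v₃,·)|_x - ω([v₁,v₃],v₂,·)|_x + ω([v₂,v₃],v₁,·)|_x = 0 as the CE differential of J_x vanishes. -/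
noncomputable section

open CartanCalculus

variable {X Ω0 Ω1 Ω2 Ω3 Ω4 Pt : Type*}
    [LieRing X] [LieAlgebra ℝ X]
    [CommRing Ω0] [Algebra ℝ Ω0] [Module Ω0 X]
    [AddCommGroup Ω1] [Module ℝ Ω1] [Module Ω0 Ω1]
    [AddCommGroup Ω2] [Module ℝ Ω2]
    [AddCommGroup Ω3] [Module ℝ Ω3]
    [AddCommGroup Ω4] [Module ℝ Ω4]

/-- `J_x(v₁,v₂,v₃) = ω(v₁,v₂,v₃)|_x` is a Chevalley–Eilenberg 3-cocycle on the
Lie algebra of Hamiltonian vector fields: its CE differential vanishes. -/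
theorem threeCocycle
    (C : CartanCalculus X Ω0 Ω1 Ω2 Ω3 Ω4 Pt) (ω : Ω3)
    (hcl : C.d3 ω = 0) (hnd : ∀ v : X, C.i3 v ω = 0 → v = 0)
    (x : Pt) :
    ∀ v1 v2 v3 v4 : X,
      C.IsHamVF ω v1 → C.IsHamVF ω v2 → C.IsHamVF ω v3 → C.IsHamVF ω v4 →
      - C.ev x (C.i1 v4 (C.i2 v3 (C.i3 ⁅v1, v2⁆ ω)))
        + C.ev x (C.i1 v4 (C.i2 v2 (C.i3 ⁅v1, v3⁆ ω)))
        - C.ev x (C.i1 v3 (C.i2 v2 (C.i3 ⁅v1, v4⁆ ω)))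
        - C.ev x (C.i1 v4 (C.i2 v1 (C.i3 ⁅v2, v3⁆ ω)))
        + C.ev x (C.i1 v3 (C.i2 v1 (C.i3 ⁅v2, v4⁆ ω)))
        - C.ev x (C.i1 v2 (C.i2 v1 (C.i3 ⁅v3, v4⁆ ω))) = 0 := by
  intro v1 v2 v3 v4 hh1 hh2 hh3 hh4
  obtain ⟨β1, hβ1⟩ := hh1
  obtain ⟨β2, hβ2⟩ := hh2
  obtain ⟨β3, hβ3⟩ := hh3
  obtain ⟨β4, hβ4⟩ := hh4
  -- Hamiltonian vector fields have closed contraction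
  have hd : ∀ (α : Ω1) (v : X), C.IsHam ω α v → C.d2 (C.i3 v ω) = 0 := by
    intro α v h
    have h2 := C.d2_d1 α
    rw [show C.d1 α = -C.i3 v ω from h, map_neg, neg_eq_zero] at h2
    exact h2
  have h1' := hd β1 v1 hβ1
  have h2' := hd β2 v2 hβ2
  have h3' := hd β3 v3 hβ3
  have h4' := hd β4 v4 hβ4
  -- cyclic symmetry of the triple contraction
  have cyc : ∀ a b c : X,
      C.i1 a (C.i2 b (C.i3 c ω)) = C.i1 c (C.i2 a (C.i3 b ω)) := by
    intro a b c
    have hA := congrArg (C.i1 a) (C.i_skew3 b c ω)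
    simp only [map_neg] at hA
    have hB := C.i_skew2 a c (C.i3 b ω)
    linear_combination hA - hB
  -- skew symmetry in the first two slots
  have sw : ∀ a b c : X,
      C.i1 a (C.i2 b (C.i3 c ω)) = -C.i1 b (C.i2 a (C.i3 c ω)) := by
    intro a b c; exact C.i_skew2 a b (C.i3 c ω)
  -- i1 is additive-negation compatible in the vector slot
  have negi1 : ∀ (u : X) (β : Ω1), C.i1 (-u) β = -C.i1 u β := by
    intro u β
    rw [← neg_one_smul Ω0 u, C.i1_smulX, neg_one_mul]
  -- key invariance identity: L_i commutes with contractions up to brackets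
  have hR : ∀ i j k l : X, C.d2 (C.i3 i ω) = 0 →
      C.i1 i (C.d0 (C.i1 j (C.i2 k (C.i3 l ω)))) =
        C.i1 ⁅i, j⁆ (C.i2 k (C.i3 l ω)) + C.i1 j (C.i2 ⁅i, k⁆ (C.i3 l ω))
          + C.i1 j (C.i2 k (C.i3 ⁅i, l⁆ ω)) := by
    intro i j k l hi
    have h3 : C.i3 ⁅i, l⁆ ω
        = C.i3 i (C.d2 (C.i3 l ω)) + C.d1 (C.i2 i (C.i3 l ω)) := by
      rw [C.ibr3, hcl, hi]; simp
    have h2 : C.i2 ⁅i, k⁆ (C.i3 l ω) + C.i2 k (C.i3 ⁅i, l⁆ ω)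
        = C.i2 i (C.d1 (C.i2 k (C.i3 l ω))) + C.d0 (C.i1 i (C.i2 k (C.i3 l ω))) := by
      rw [C.ibr2, h3]
      simp only [map_add]
      abel
    have h2' := congrArg (C.i1 j) h2
    simp only [map_add] at h2'
    have hb := C.ibr1 i j (C.i2 k (C.i3 l ω))
    simp only [map_add] at hb
    linear_combination -hb - h2'
  have hR1 := hR v1 v2 v3 v4 h1'
  have hR2 := hR v2 v1 v3 v4 h2'
  -- ι_{[v3,v4]} ω = d (ι_{v3} ι_{v4} ω)
  have hA34 : C.i3 ⁅v3, v4⁆ ω = C.d1 (C.i2 v3 (C.i3 v4 ω)) := by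
    rw [C.ibr3, hcl, h3', h4']; simp
  -- the Jacobiator identity
  have hD : C.i1 v1 (C.i2 v2 (C.i3 ⁅v3, v4⁆ ω)) =
      C.i1 ⁅v1, v2⁆ (C.i2 v3 (C.i3 v4 ω))
        - C.i1 v1 (C.d0 (C.i1 v2 (C.i2 v3 (C.i3 v4 ω))))
        + C.i1 v2 (C.d0 (C.i1 v1 (C.i2 v3 (C.i3 v4 ω)))) := by
    have hsk := C.i_skew2 v1 v2 (C.d1 (C.i2 v3 (C.i3 v4 ω)))
    have hb := C.ibr1 v1 v2 (C.i2 v3 (C.i3 v4 ω))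
    simp only [map_add] at hb
    rw [hA34]
    linear_combination hsk - hb
  -- normalize all atoms to the goal's spellings
  have ea1 : C.i1 ⁅v1, v2⁆ (C.i2 v3 (C.i3 v4 ω))
      = -C.i1 v4 (C.i2 v3 (C.i3 ⁅v1, v2⁆ ω)) := by
    linear_combination cyc ⁅v1, v2⁆ v3 v4 + cyc v4 ⁅v1, v2⁆ v3 + sw v3 v4 ⁅v1, v2⁆
  have ea2 : C.i1 v2 (C.i2 ⁅v1, v3⁆ (C.i3 v4 ω))
      = C.i1 v4 (C.i2 v2 (C.i3 ⁅v1, v3⁆ ω)) := by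
    linear_combination cyc v2 ⁅v1, v3⁆ v4
  have ea3 : C.i1 v2 (C.i2 v3 (C.i3 ⁅v1, v4⁆ ω))
      = -C.i1 v3 (C.i2 v2 (C.i3 ⁅v1, v4⁆ ω)) := sw v2 v3 ⁅v1, v4⁆
  have hng : C.i1 ⁅v2, v1⁆ (C.i2 v3 (C.i3 v4 ω))
      = -C.i1 ⁅v1, v2⁆ (C.i2 v3 (C.i3 v4 ω)) := by
    rw [show ⁅v2, v1⁆ = -⁅v1, v2⁆ from (lie_skew v2 v1).symm, negi1]
  have eb1 : C.i1 ⁅v2, v1⁆ (C.i2 v3 (C.i3 v4 ω))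
      = C.i1 v4 (C.i2 v3 (C.i3 ⁅v1, v2⁆ ω)) := by
    linear_combination hng - ea1
  have eb2 : C.i1 v1 (C.i2 ⁅v2, v3⁆ (C.i3 v4 ω))
      = C.i1 v4 (C.i2 v1 (C.i3 ⁅v2, v3⁆ ω)) := by
    linear_combination cyc v1 ⁅v2, v3⁆ v4
  have eb3 : C.i1 v1 (C.i2 v3 (C.i3 ⁅v2, v4⁆ ω))
      = -C.i1 v3 (C.i2 v1 (C.i3 ⁅v2, v4⁆ ω)) := sw v1 v3 ⁅v2, v4⁆
  have ec0 : C.i1 v1 (C.i2 v2 (C.i3 ⁅v3, v4⁆ ω))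
      = -C.i1 v2 (C.i2 v1 (C.i3 ⁅v3, v4⁆ ω)) := sw v1 v2 ⁅v3, v4⁆
  -- the cocycle identity at the level of functions
  have h0 : -C.i1 v4 (C.i2 v3 (C.i3 ⁅v1, v2⁆ ω))
        + C.i1 v4 (C.i2 v2 (C.i3 ⁅v1, v3⁆ ω))
        - C.i1 v3 (C.i2 v2 (C.i3 ⁅v1, v4⁆ ω))
        - C.i1 v4 (C.i2 v1 (C.i3 ⁅v2, v3⁆ ω))
        + C.i1 v3 (C.i2 v1 (C.i3 ⁅v2, v4⁆ ω))
        - C.i1 v2 (C.i2 v1 (C.i3 ⁅v3, v4⁆ ω)) = (0 : Ω0) := by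
    linear_combination hD - hR1 + hR2 - ec0 - ea2 - ea3 + eb1 + eb2 + eb3
  have h0' : C.ev x (-C.i1 v4 (C.i2 v3 (C.i3 ⁅v1, v2⁆ ω))
        + C.i1 v4 (C.i2 v2 (C.i3 ⁅v1, v3⁆ ω))
        - C.i1 v3 (C.i2 v2 (C.i3 ⁅v1, v4⁆ ω))
        - C.i1 v4 (C.i2 v1 (C.i3 ⁅v2, v3⁆ ω))
        + C.i1 v3 (C.i2 v1 (C.i3 ⁅v2, v4⁆ ω))
        - C.i1 v2 (C.i2 v1 (C.i3 ⁅v3, v4⁆ ω))) = 0 := by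
    rw [h0, map_zero]
  simp only [map_add, map_sub, map_neg] at h0'
  linear_combination h0'

end
end
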